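/- For k ≥ r ≥ 3, N₂ ≥ 0 and m ≥ 0, let π be a partition in ℰ(k,r) such that there are exactly N₂ parts marked with 2 in GG(π). Then π is a partition in C_<(k,r|m) if and only if m ≥ N₂. -/

import Mathlib

namespace Bressoud

/-- A partition: a weakly decreasing list of positive integers. -/
structure Partition where
  parts : List ℕ
  pos : ∀ x ∈ parts, 0 < x
  sorted : parts.Pairwise (· ≥ ·)

namespace Partition

/-- `|π|`, the sum of the parts of `π`. -/
def size (π : Partition) : ℕ := π.parts.sum

/-- `ℓ(π)`, the number of parts of `π`. -/
def numParts (π : Partition) : ℕ := π.parts.length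

end Partition

lemma exists_pos_not_mem (s : List ℕ) : ∃ n, 0 < n ∧ n ∉ s := by
  refine ⟨s.sum + 1, Nat.succ_pos _, fun h => ?_⟩
  have := List.single_le_sum (l := s) (fun x _ => Nat.zero_le x) _ h
  omega

/-- The least positive integer not occurring in `s`. -/
def mex1 (s : List ℕ) : ℕ := Nat.find (exists_pos_not_mem s)

/-- Parts `p ≥ q` conflict (must receive different marks) when `p - q ≤ 2`,
with strict inequality when `p` is odd. -/
def conflict (p q : ℕ) : Bool :=
  if p % 2 = 1 then decide (p - q < 2) else decide (p - q ≤ 2)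

/-- Greedy computation of the Göllnitz–Gordon marking: the parts are processed
from smallest to largest (second argument: remaining parts in increasing
order; first argument: already processed parts with their marks), and each
part receives the least positive mark different from the marks of all already
processed conflicting parts. -/
def ggAux : List (ℕ × ℕ) → List ℕ → List (ℕ × ℕ)
  | acc, [] => acc
  | acc, p :: rest =>
      ggAux ((p, mex1 ((acc.filter fun q => conflict p q.1).map Prod.snd)) :: acc) rest

/-- The Göllnitz–Gordon marking `GG(π)` of `π`, as a list of (part, mark)
pairs in decreasing order of parts. -/
def ggMarks (π : Partition) : List (ℕ × ℕ) := ggAux [] π.parts.reverse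

/-- There is an `m`-marked part equal to `x` in `GG(π)`. -/
def Marked (π : Partition) (x m : ℕ) : Prop := (x, m) ∈ ggMarks π

instance (π : Partition) (x m : ℕ) : Decidable (Marked π x m) := by
  unfold Marked; infer_instance

/-- The `i`-th row of `GG(π)`: the `i`-marked parts, in decreasing order. -/
def row (π : Partition) (i : ℕ) : List ℕ :=
  ((ggMarks π).filter fun q => q.2 == i).map Prod.fst

/-- `N_i(π)`: the number of `i`-marked parts of `π`. -/
def Nmk (π : Partition) (i : ℕ) : ℕ := (row π i).length

/-- `π^{(i)}_j` as a natural number (meaningful for `1 ≤ j ≤ N_i(π)`;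
junk value `0` otherwise). -/
def nth (π : Partition) (i j : ℕ) : ℕ := (row π i).getD (j - 1) 0

/-- The canonical embedding of the natural numbers into `EReal`. -/
noncomputable def natE (n : ℕ) : EReal := ((n : ℝ) : EReal)

/-- `π^{(i)}_j` as an extended real, with the conventions `π^{(i)}_0 = +∞`
and `π^{(i)}_j = -∞` for `j > N_i(π)`. -/
noncomputable def rowVal (π : Partition) (i j : ℕ) : EReal :=
  if j = 0 then ⊤
  else
    match (row π i)[j - 1]? with
    | some x => natE x
    | none => ⊥

/-- The largest `l ≥ 0` such that there is no odd part of `π` greater than or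
equal to `π^{(2)}_l` (the indices `1 ≤ j ≤ N₂(π)` with this property form an
initial segment, so this is also their number). -/
def bigL (π : Partition) : ℕ :=
  ((List.range' 1 (Nmk π 2)).filter fun j =>
    decide (∀ x ∈ π.parts, x % 2 = 1 → x < nth π 2 j)).length

/-- `startPair π b = (starting type of π^{(2)}_b, s_b(π))` for `1 ≤ b ≤ N₂(π)`.
Starting types are encoded by integers: `-1` stands for `s₋₁`, and `0,1,2,3`
for `s₀,s₁,s₂,s₃`; the value `9` is a junk value used when no case applies. -/
def startPair (π : Partition) : ℕ → ℤ × ℕ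
  | 0 => (9, 0)
  | b + 1 =>
    let v := nth π 2 (b + 1)
    if bigL π < b + 1 then (-1, 0)
    else
      let okLow : Bool :=
        if b = 0 then !decide ((v + 2) ∈ π.parts)
        else !decide (Marked π (v + 2) 1) || decide ((startPair π b).2 = v + 2)
      let ok2 : Bool :=
        if b = 0 then decide (Marked π (v + 2) 1)
        else decide (Marked π (v + 2) 1) && !decide ((startPair π b).2 = v + 2)
      if decide (Marked π (v - 1) 1) && okLow then (0, v - 1)
      else if decide (Marked π (v - 2) 1) && okLow then (1, v - 2)
      else if ok2 then (2, v + 2)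
      else if decide (Marked π v 1) then (3, v)
      else (9, 0)

/-- The starting type of `π^{(2)}_b`, encoded as an integer. -/
def startType (π : Partition) (b : ℕ) : ℤ := (startPair π b).1

/-- The set `C(k,r)`: partitions with no repeated odd part, in which the parts
equal to `1` and `2` have marks at most `r - 1`, and whose Göllnitz–Gordon
marking has at most `k - 1` rows. -/
def C (k r : ℕ) : Set Partition :=
  { π | (∀ x, x % 2 = 1 → π.parts.count x ≤ 1) ∧
        (∀ x m, Marked π x m → x ≤ 2 → m ≤ r - 1) ∧
        (∀ x m, Marked π x m → m ≤ k - 1) }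

/-- The set `C_<(k,r|p,t)`. -/
noncomputable def Clt (k r p t : ℕ) : Set Partition :=
  { π | π ∈ C k r ∧
        (∀ x ∈ π.parts, x % 2 = 1 → x < 2 * t + 1) ∧
        rowVal π 2 (p + 1) < natE (2 * t + 1) ∧
        natE (2 * t + 1) < rowVal π 2 p ∧
        (rowVal π 2 p = natE (2 * t + 2) →
          startType π p = 2 ∨ startType π p = 3) ∧
        (rowVal π 2 (p + 1) = natE (2 * t) →
          startType π (p + 1) = 0 ∨ startType π (p + 1) = 1) }

/-- The set `C_=(k,r|p,t)`. -/
noncomputable def Ceq (k r p t : ℕ) : Set Partition :=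
  { π | π ∈ C k r ∧
        (2 * t + 1) ∈ π.parts ∧
        (∀ x ∈ π.parts, x % 2 = 1 → x ≤ 2 * t + 1) ∧
        (∀ m, Marked π (2 * t + 1) m → m ≤ 2) ∧
        natE (2 * t + 2) ≤ rowVal π 2 p ∧
        rowVal π 2 (p + 1) ≤ natE (2 * t + 2) ∧
        ((∃ j, 1 ≤ j ∧ j ≤ Nmk π 2 ∧ nth π 2 j = 2 * t + 2 ∧ startType π j = 0) →
          rowVal π 2 (p + 1) = natE (2 * t + 2) ∧
          ∃ i, 1 ≤ i ∧ i ≤ p + 1 ∧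
            nth π 2 i = 2 * t + 2 + 4 * (p + 1 - i) ∧
            π.parts.count (2 * t + 2 + 4 * (p + 1 - i)) = 1) ∧
        ((∃ j, 1 ≤ j ∧ j ≤ Nmk π 2 ∧ nth π 2 j = 2 * t + 2 ∧ startType π j = 2) →
          rowVal π 2 p = natE (2 * t + 2)) ∧
        ((2 * t + 2) ∈ π.parts → ¬ Marked π (2 * t + 2) 2 →
          rowVal π 2 p = natE (2 * t + 4) ∧ startType π p = 3 ∧
          ∃ i, 1 ≤ i ∧ i ≤ p ∧
            nth π 2 i = 2 * t + 4 + 4 * (p - i) ∧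
            (2 * t + 4 + 4 * (p - i) + 2) ∉ π.parts) }

/-- The first starting cluster index `p₁` of `π` (with `p₀ = p + 1`): the least
`j ≥ 1` such that `π^{(2)}_j = π^{(2)}_p + 4(p - j)` and all of
`π^{(2)}_j, …, π^{(2)}_p` have the same starting type as `π^{(2)}_p`. -/
def firstCluster (π : Partition) (p : ℕ) : ℕ :=
  ((List.range' 1 p).filter fun j =>
    (List.range' j (p + 1 - j)).all fun i =>
      decide (nth π 2 i = nth π 2 p + 4 * (p - i)) &&
      decide (startType π i = startType π p)).headD p

/-- The set `ℰ(k,r)` of partitions in `C(k,r)` with no odd parts. -/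
def E (k r : ℕ) : Set Partition :=
  { π | π ∈ C k r ∧ ∀ x ∈ π.parts, x % 2 = 0 }

/-- `C_<(k,r|m) = ⋃_{p+t=m} C_<(k,r|p,t)`. -/
noncomputable def Cltm (k r m : ℕ) : Set Partition :=
  { π | ∃ p t, p + t = m ∧ π ∈ Clt k r p t }

/-- `C_=(k,r|m) = ⋃_{p+t=m} C_=(k,r|p,t)`. -/
noncomputable def Ceqm (k r m : ℕ) : Set Partition :=
  { π | ∃ p t, p + t = m ∧ π ∈ Ceq k r p t }

/-- `I_N`: partitions into distinct odd parts, each at least `2N + 1`. -/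
def Iset (N : ℕ) : Set Partition :=
  { ζ | (∀ x ∈ ζ.parts, x % 2 = 1 ∧ 2 * N + 1 ≤ x) ∧ ζ.parts.Nodup }

/-- `F(3,3)`: pairs `(π, ζ)` with `π ∈ ℰ(3,3)` and `ζ ∈ I_{N₂(π)}`. -/
noncomputable def F33 : Set (Partition × Partition) :=
  { pq | pq.1 ∈ E 3 3 ∧ pq.2 ∈ Iset (Nmk pq.1 2) }

lemma mex1_pos (s : List ℕ) : 0 < mex1 s := (Nat.find_spec (exists_pos_not_mem s)).1

lemma mex1_not_mem (s : List ℕ) : mex1 s ∉ s := (Nat.find_spec (exists_pos_not_mem s)).2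

lemma mex1_min {s : List ℕ} {n : ℕ} (h0 : 0 < n) (h : n < mex1 s) : n ∈ s := by
  by_contra hn; exact Nat.find_min (exists_pos_not_mem s) h ⟨h0, hn⟩

def GoodAcc (acc : List (ℕ × ℕ)) : Prop :=
  acc.Pairwise (fun a b => b.1 ≤ a.1 ∧ (conflict a.1 b.1 = true → a.2 ≠ b.2)) ∧
  (∀ a ∈ acc, 1 ≤ a.2) ∧
  (∀ a ∈ acc, ∀ m', 1 ≤ m' → m' < a.2 →
    ∃ b ∈ acc, b.1 ≤ a.1 ∧ conflict a.1 b.1 = true ∧ b.2 = m')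

lemma ggAux_subset : ∀ (l : List ℕ) (acc : List (ℕ × ℕ)), ∀ b ∈ acc, b ∈ ggAux acc l := by
  intro l
  induction l with
  | nil => intro acc b hb; simpa [ggAux] using hb
  | cons p rest ih =>
      intro acc b hb
      simp only [ggAux]
      exact ih _ _ (List.mem_cons_of_mem _ hb)

lemma ggAux_map_fst : ∀ (l : List ℕ) (acc : List (ℕ × ℕ)),
    (ggAux acc l).map Prod.fst = l.reverse ++ acc.map Prod.fst := by
  intro l
  induction l with
  | nil => intro acc; simp [ggAux]
  | cons p rest ih =>
      intro acc
      simp only [ggAux, ih, List.reverse_cons, List.map_cons]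
      simp

lemma ggAux_good : ∀ (l : List ℕ) (acc : List (ℕ × ℕ)),
    l.Pairwise (· ≤ ·) → (∀ p ∈ l, ∀ b ∈ acc, b.1 ≤ p) → GoodAcc acc →
    GoodAcc (ggAux acc l) := by
  intro l
  induction l with
  | nil => intro acc _ _ h; simpa [ggAux] using h
  | cons p rest ih =>
      intro acc hs hle hg
      simp only [ggAux]
      set M := ((acc.filter fun q => conflict p q.1).map Prod.snd) with hM
      set a : ℕ × ℕ := (p, mex1 M) with ha
      apply ih
      · exact hs.of_cons
      · intro q hq b hb
        rcases List.mem_cons.mp hb with rfl | hb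
        · exact (List.pairwise_cons.mp hs).1 q hq
        · exact hle q (List.mem_cons_of_mem _ hq) b hb
      · obtain ⟨hpw, hpos, hmin⟩ := hg
        refine ⟨?_, ?_, ?_⟩
        · refine List.pairwise_cons.mpr ⟨?_, hpw⟩
          intro b hb
          refine ⟨hle p (List.mem_cons_self) b hb, ?_⟩
          intro hc hne
          exact mex1_not_mem M (show a.2 ∈ M from hne ▸
            List.mem_map_of_mem (List.mem_filter.mpr ⟨hb, hc⟩))
        · intro b hb
          rcases List.mem_cons.mp hb with rfl | hb
          · exact mex1_pos M
          · exact hpos b hb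
        · intro b hb m' hm1 hm2
          rcases List.mem_cons.mp hb with rfl | hb
          · have hmem : m' ∈ M := mex1_min hm1 hm2
            rw [hM] at hmem
            obtain ⟨q, hq, hq2⟩ := List.mem_map.mp hmem
            obtain ⟨hqacc, hqc⟩ := List.mem_filter.mp hq
            exact ⟨q, List.mem_cons_of_mem _ hqacc,
              hle p (List.mem_cons_self) q hqacc, hqc, hq2⟩
          · obtain ⟨c, hc1, hc2⟩ := hmin b hb m' hm1 hm2
            exact ⟨c, List.mem_cons_of_mem _ hc1, hc2⟩

lemma ggMarks_good (π : Partition) : GoodAcc (ggMarks π) := by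
  apply ggAux_good
  · exact List.pairwise_reverse.mpr π.sorted
  · simp
  · exact ⟨List.Pairwise.nil, by simp, by simp⟩

lemma ggMarks_map_fst (π : Partition) : (ggMarks π).map Prod.fst = π.parts := by
  simpa [ggMarks] using ggAux_map_fst π.parts.reverse []
lemma Marked.mem {π : Partition} {x m : ℕ} (h : Marked π x m) : x ∈ π.parts := by
  rw [← ggMarks_map_fst π]
  exact List.mem_map_of_mem h

lemma mem_marked {π : Partition} {x : ℕ} (h : x ∈ π.parts) : ∃ m, Marked π x m := by
  rw [← ggMarks_map_fst π] at h
  obtain ⟨⟨a, b⟩, hab, rfl⟩ := List.mem_map.mp h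
  exact ⟨b, hab⟩

lemma Marked.one_le {π : Partition} {x m : ℕ} (h : Marked π x m) : 1 ≤ m :=
  (ggMarks_good π).2.1 (x, m) h

lemma Marked.min {π : Partition} {x m : ℕ} (h : Marked π x m) {m' : ℕ}
    (h1 : 1 ≤ m') (h2 : m' < m) :
    ∃ q, Marked π q m' ∧ q ≤ x ∧ conflict x q = true := by
  obtain ⟨b, hb, hle, hc, hb2⟩ := (ggMarks_good π).2.2 (x, m) h m' h1 h2
  exact ⟨b.1, by rwa [Marked, ← hb2], hle, hc⟩

lemma mem_row_iff {π : Partition} {x i : ℕ} : x ∈ row π i ↔ Marked π x i := by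
  constructor
  · intro h
    obtain ⟨⟨a, b⟩, hab, rfl⟩ := List.mem_map.mp h
    have := List.of_mem_filter hab
    simp only [beq_iff_eq] at this
    subst this
    exact List.mem_of_mem_filter hab
  · intro h
    exact List.mem_map_of_mem (List.mem_filter.mpr ⟨h, by simp⟩)

lemma row_pairwise (π : Partition) (i : ℕ) :
    (row π i).Pairwise (fun x y => y ≤ x ∧ conflict x y = false) := by
  have hpw := (ggMarks_good π).1
  have h1 : ((ggMarks π).filter fun q => q.2 == i).Pairwise
      (fun a b => b.1 ≤ a.1 ∧ (conflict a.1 b.1 = true → a.2 ≠ b.2)) :=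
    hpw.sublist List.filter_sublist
  have h2 : ((ggMarks π).filter fun q => q.2 == i).Pairwise
      (fun a b => b.1 ≤ a.1 ∧ conflict a.1 b.1 = false) := by
    refine h1.imp_of_mem ?_
    intro a b ha hb hab
    have hai : a.2 = i := by simpa using List.of_mem_filter ha
    have hbi : b.2 = i := by simpa using List.of_mem_filter hb
    refine ⟨hab.1, ?_⟩
    by_contra hc
    exact hab.2 (by simpa using hc) (hai.trans hbi.symm)
  rw [row, List.pairwise_map]
  exact h2

lemma nth_mem {π : Partition} {i j : ℕ} (h1 : 1 ≤ j) (h2 : j ≤ Nmk π i) :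
    nth π i j ∈ row π i := by
  rw [nth]
  have hlt : j - 1 < (row π i).length := by
    rw [← Nmk]; omega
  rw [List.getD_eq_getElem _ _ hlt]
  exact List.getElem_mem _

lemma nth_marked {π : Partition} {i j : ℕ} (h1 : 1 ≤ j) (h2 : j ≤ Nmk π i) :
    Marked π (nth π i j) i := mem_row_iff.mp (nth_mem h1 h2)

lemma nth_gap {π : Partition} {i j : ℕ} (h1 : 1 ≤ i) (hij : i < j) (h2 : j ≤ Nmk π 2)
    (heven : ∀ x ∈ π.parts, x % 2 = 0) :
    nth π 2 j + 4 ≤ nth π 2 i := by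
  have hpw := row_pairwise π 2
  have hi : i - 1 < (row π 2).length := by rw [← Nmk]; omega
  have hj : j - 1 < (row π 2).length := by rw [← Nmk]; omega
  have hR := (List.pairwise_iff_get.mp hpw) ⟨i - 1, hi⟩ ⟨j - 1, hj⟩ (by simpa using by omega)
  have hni : nth π 2 i = (row π 2).get ⟨i - 1, hi⟩ := by
    rw [nth, List.getD_eq_getElem _ _ hi]; rfl
  have hnj : nth π 2 j = (row π 2).get ⟨j - 1, hj⟩ := by
    rw [nth, List.getD_eq_getElem _ _ hj]; rfl
  rw [← hni, ← hnj] at hR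
  obtain ⟨hle, hcf⟩ := hR
  have hie : nth π 2 i % 2 = 0 := heven _ (Marked.mem (nth_marked h1 (le_of_lt (lt_of_lt_of_le hij h2))))
  have hje : nth π 2 j % 2 = 0 := heven _ (Marked.mem (nth_marked (by omega) h2))
  rw [conflict, if_neg (by omega)] at hcf
  have : ¬ (nth π 2 i - nth π 2 j ≤ 2) := by simpa using hcf
  omega

lemma nth_pos_even {π : Partition} {j : ℕ} (h1 : 1 ≤ j) (h2 : j ≤ Nmk π 2)
    (heven : ∀ x ∈ π.parts, x % 2 = 0) :
    2 ≤ nth π 2 j ∧ nth π 2 j % 2 = 0 := by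
  have hm : nth π 2 j ∈ π.parts := Marked.mem (nth_marked h1 h2)
  have := π.pos _ hm
  have := heven _ hm
  omega

lemma nth_cum {π : Partition} (heven : ∀ x ∈ π.parts, x % 2 = 0) :
    ∀ d i, 1 ≤ i → i + d ≤ Nmk π 2 → nth π 2 (i + d) + 4 * d ≤ nth π 2 i := by
  intro d
  induction d with
  | zero => intro i _ _; simp
  | succ n ih =>
      intro i h1 h2
      have hstep : nth π 2 (i + 1) + 4 ≤ nth π 2 i :=
        nth_gap h1 (by omega) (by omega) heven
      have := ih (i + 1) (by omega) (by omega)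
      have heq : i + 1 + n = i + (n + 1) := by omega
      rw [heq] at this
      omega

lemma natE_lt_natE {a b : ℕ} : natE a < natE b ↔ a < b := by
  rw [natE, natE, EReal.coe_lt_coe_iff]
  exact_mod_cast Iff.rfl

lemma bot_lt_natE (a : ℕ) : (⊥ : EReal) < natE a := EReal.bot_lt_coe _

lemma natE_lt_top (a : ℕ) : natE a < (⊤ : EReal) := EReal.coe_lt_top _

lemma natE_inj {a b : ℕ} : natE a = natE b ↔ a = b := by
  rw [natE, natE, EReal.coe_eq_coe_iff]
  exact_mod_cast Iff.rfl

lemma rowVal_zero (π : Partition) (i : ℕ) : rowVal π i 0 = ⊤ := by simp [rowVal]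

lemma rowVal_of_le {π : Partition} {i j : ℕ} (h1 : 1 ≤ j) (h2 : j ≤ Nmk π i) :
    rowVal π i j = natE (nth π i j) := by
  have hlt : j - 1 < (row π i).length := by rw [← Nmk]; omega
  rw [rowVal, if_neg (by omega), List.getElem?_eq_getElem hlt]
  rw [nth, List.getD_eq_getElem _ _ hlt]

lemma rowVal_of_gt {π : Partition} {i j : ℕ} (h : Nmk π i < j) :
    rowVal π i j = ⊥ := by
  have hge : (row π i).length ≤ j - 1 := by rw [← Nmk]; omega
  rw [rowVal, if_neg (by omega), List.getElem?_eq_none hge]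
lemma bigL_eq {π : Partition} (heven : ∀ x ∈ π.parts, x % 2 = 0) : bigL π = Nmk π 2 := by
  rw [bigL]
  have h : ∀ j ∈ List.range' 1 (Nmk π 2),
      (decide (∀ x ∈ π.parts, x % 2 = 1 → x < nth π 2 j)) = true := by
    intro j _
    simp only [decide_eq_true_eq]
    intro x hx h1
    have := heven x hx; omega
  rw [List.filter_eq_self.mpr h, List.length_range']

lemma marked_le_first {π : Partition} {x : ℕ} (h : Marked π x 2) : x ≤ nth π 2 1 := by
  have hx : x ∈ row π 2 := mem_row_iff.mpr h
  have hpw := row_pairwise π 2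
  have hne : row π 2 ≠ [] := fun he => by rw [he] at hx; exact absurd hx List.not_mem_nil
  obtain ⟨hd, tl, heq⟩ := List.exists_cons_of_ne_nil hne
  rw [heq] at hx hpw
  have h1 : nth π 2 1 = hd := by rw [nth, heq]; rfl
  rw [h1]
  rcases List.mem_cons.mp hx with rfl | hx
  · exact le_refl _
  · exact ((List.pairwise_cons.mp hpw).1 x hx).1

/-- If the largest `2`-marked part is `v`, `v+2 ∈ π`, no copy of `v+2` is
`1`-marked and `v` is not `1`-marked, we get a contradiction (even partition). -/
lemma no_gap {π : Partition} (heven : ∀ x ∈ π.parts, x % 2 = 0) (hN : 1 ≤ Nmk π 2)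
    (hdL : nth π 2 1 + 2 ∈ π.parts)
    (hd2 : ¬ Marked π (nth π 2 1 + 2) 1) (hd3 : ¬ Marked π (nth π 2 1) 1) : False := by
  set v := nth π 2 1 with hv
  have hvpe := nth_pos_even (le_refl 1) hN heven
  obtain ⟨m, hm⟩ := mem_marked hdL
  have hm1 : 1 ≤ m := hm.one_le
  rcases Nat.lt_or_ge m 2 with h | h
  · have hm1' : m = 1 := by omega
    subst hm1'
    exact hd2 hm
  rcases Nat.lt_or_ge m 3 with h' | h'
  · have : m = 2 := by omega
    rw [this] at hm
    have := marked_le_first hm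
    omega
  · obtain ⟨q, hq1, hqle, hqc⟩ := hm.min (le_refl 1) (by omega)
    have hqe : q % 2 = 0 := heven q hq1.mem
    have hqpos := π.pos q hq1.mem
    rw [conflict, if_neg (by omega)] at hqc
    have hd : v + 2 - q ≤ 2 := by simpa using hqc
    have : q = v ∨ q = v + 2 := by omega
    rcases this with rfl | rfl
    · exact hd3 hq1
    · exact hd2 hq1

lemma startType_cases {π : Partition} (heven : ∀ x ∈ π.parts, x % 2 = 0) {b : ℕ}
    (h2 : b + 1 ≤ Nmk π 2) :
    startType π (b+1) = 0 ∨ startType π (b+1) = 1 ∨ startType π (b+1) = 2 ∨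
      startType π (b+1) = 3 := by
  have hbig : ¬ (bigL π < b + 1) := by rw [bigL_eq heven]; omega
  have hvpe := nth_pos_even (Nat.le_add_left 1 b) h2 heven
  have hv2 : Marked π (nth π 2 (b+1)) 2 := nth_marked (Nat.le_add_left 1 b) h2
  -- a conflicting 1-marked neighbour exists
  have hd13 : Marked π (nth π 2 (b+1) - 2) 1 ∨ Marked π (nth π 2 (b+1)) 1 := by
    obtain ⟨q, hq1, hqle, hqc⟩ := hv2.min (le_refl 1) (by omega)
    have hqe : q % 2 = 0 := heven q hq1.mem
    have hqpos := π.pos q hq1.mem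
    rw [conflict, if_neg (by omega)] at hqc
    have hd : nth π 2 (b+1) - q ≤ 2 := by simpa using hqc
    have : q = nth π 2 (b+1) - 2 ∨ q = nth π 2 (b+1) := by omega
    rcases this with rfl | rfl
    · exact Or.inl hq1
    · exact Or.inr hq1
  have hd0 : ¬ Marked π (nth π 2 (b+1) - 1) 1 := by
    intro h
    have := heven _ h.mem
    omega
  rw [startType, startPair, if_neg hbig]
  rcases Nat.eq_zero_or_pos b with rfl | hbpos
  · by_cases d3 : Marked π (nth π 2 (0+1)) 1
    · by_cases d1 : Marked π (nth π 2 (0+1) - 2) 1 <;>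
        by_cases dL : (nth π 2 (0+1) + 2) ∈ π.parts <;>
        by_cases d2 : Marked π (nth π 2 (0+1) + 2) 1 <;>
        simp [hd0, d1, dL, d2, d3]
    · have d1 : Marked π (nth π 2 (0+1) - 2) 1 := hd13.resolve_right d3
      by_cases dL : (nth π 2 (0+1) + 2) ∈ π.parts
      · by_cases d2 : Marked π (nth π 2 (0+1) + 2) 1
        · simp [hd0, d1, dL, d2, d3]
        · exact (no_gap heven (by omega) (by simpa using dL)
            (by simpa using d2) (by simpa using d3)).elim
      · simp [hd0, d1, dL, d3]
  · have hb0 : ¬ (b = 0) := by omega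
    by_cases d3 : Marked π (nth π 2 (b+1)) 1
    · by_cases d1 : Marked π (nth π 2 (b+1) - 2) 1 <;>
        by_cases d2 : Marked π (nth π 2 (b+1) + 2) 1 <;>
        by_cases dP : (startPair π b).2 = nth π 2 (b+1) + 2 <;>
        simp [hd0, hb0, d1, d2, dP, d3]
    · have d1 : Marked π (nth π 2 (b+1) - 2) 1 := hd13.resolve_right d3
      by_cases d2 : Marked π (nth π 2 (b+1) + 2) 1 <;>
        by_cases dP : (startPair π b).2 = nth π 2 (b+1) + 2 <;>
        simp [hd0, hb0, d1, d2, dP, d3]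
/-- Theorem 5.2: a partition `π ∈ ℰ(k,r)` with `N₂` parts marked `2` lies in
`C_<(k,r|m)` if and only if `m ≥ N₂`. -/
theorem E_mem_Cltm_iff (k r m N₂ : ℕ) (hrk : r ≤ k) (hr : 3 ≤ r)
    (π : Partition) (hπ : π ∈ E k r) (hN : Nmk π 2 = N₂) :
    π ∈ Cltm k r m ↔ N₂ ≤ m := by
  obtain ⟨hC, heven⟩ := hπ
  subst hN
  constructor
  · rintro ⟨p, t, hpt, hClt⟩
    obtain ⟨-, -, hlow, -, -, -⟩ := hClt
    by_contra hcon
    push_neg at hcon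
    have hp1 : p + 1 ≤ Nmk π 2 := by omega
    rw [rowVal_of_le (by omega) hp1] at hlow
    have h1 : nth π 2 (p + 1) < 2 * t + 1 := natE_lt_natE.mp hlow
    have h2 := nth_cum heven (Nmk π 2 - (p + 1)) (p + 1) (by omega) (by omega)
    have h3 := nth_pos_even (show 1 ≤ Nmk π 2 by omega) (le_refl _) heven
    have heq : p + 1 + (Nmk π 2 - (p + 1)) = Nmk π 2 := by omega
    rw [heq] at h2
    omega
  · intro hm
    classical
    set P : ℕ → Prop := fun p => 2 * (m - p) + 2 ≤ nth π 2 p with hPdef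
    set p₀ := Nat.findGreatest P (Nmk π 2) with hp₀def
    obtain ⟨hle, hpos, hgt⟩ := (Nat.findGreatest_eq_iff).mp hp₀def.symm
    set t₀ := m - p₀ with ht₀
    have hpt : p₀ + t₀ = m := by omega
    clear hp₀def
    clear_value t₀ p₀ P
    have hupper : p₀ < Nmk π 2 → nth π 2 (p₀ + 1) + 2 ≤ 2 * t₀ ∧ 1 ≤ t₀ := by
      intro h
      have hnp := hgt (show p₀ < p₀ + 1 by omega) (show p₀ + 1 ≤ Nmk π 2 by omega)
      simp only [hPdef] at hnp
      push_neg at hnp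
      have hev := nth_pos_even (j := p₀ + 1) (le_add_self) (by omega) heven
      omega
    have hlower : p₀ ≠ 0 → 2 * t₀ + 2 ≤ nth π 2 p₀ := by
      intro h
      have := hpos h
      simp only [hPdef] at this
      omega
    have main_noshift :
        (nth π 2 p₀ = 2 * t₀ + 2 → p₀ ≠ 0 →
          startType π p₀ = 2 ∨ startType π p₀ = 3) → π ∈ Cltm k r m := by
      intro hty
      refine ⟨p₀, t₀, hpt, hC, fun x hx h1 => absurd (heven x hx) (by omega),
        ?_, ?_, ?_, ?_⟩
      · rcases Nat.lt_or_ge p₀ (Nmk π 2) with h | h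
        · rw [rowVal_of_le (by omega) (by omega)]
          exact natE_lt_natE.mpr (by have := hupper h; omega)
        · rw [rowVal_of_gt (by omega)]
          exact bot_lt_natE _
      · rcases Nat.eq_zero_or_pos p₀ with h | h
        · rw [h, rowVal_zero]; exact natE_lt_top _
        · rw [rowVal_of_le (by omega) hle]
          exact natE_lt_natE.mpr (by have := hlower (by omega); omega)
      · intro hval
        rcases Nat.eq_zero_or_pos p₀ with h | h
        · rw [h, rowVal_zero] at hval
          exact absurd hval (natE_lt_top _).ne'
        · rw [rowVal_of_le (by omega) hle] at hval
          exact hty (natE_inj.mp hval) (by omega)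
      · intro hval
        rcases Nat.lt_or_ge p₀ (Nmk π 2) with h | h
        · rw [rowVal_of_le (by omega) (by omega)] at hval
          exact absurd (natE_inj.mp hval) (by have := hupper h; omega)
        · rw [rowVal_of_gt (by omega)] at hval
          exact absurd hval (bot_lt_natE _).ne
    by_cases hcrit : p₀ ≠ 0 ∧ nth π 2 p₀ = 2 * t₀ + 2
    · obtain ⟨hp0, hnth⟩ := hcrit
      have hb : p₀ - 1 + 1 = p₀ := by omega
      have hst := startType_cases heven (show p₀ - 1 + 1 ≤ Nmk π 2 by omega)
      rw [hb] at hst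
      rcases hst with hs | hs | hs | hs
      · -- type 0 : shift
        refine ⟨p₀ - 1, t₀ + 1, by omega, hC,
          fun x hx h1 => absurd (heven x hx) (by omega), ?_, ?_, ?_, ?_⟩
        · rw [hb, rowVal_of_le (by omega) hle]
          exact natE_lt_natE.mpr (by omega)
        · rcases Nat.eq_zero_or_pos (p₀ - 1) with h | h
          · rw [h, rowVal_zero]; exact natE_lt_top _
          · rw [rowVal_of_le (by omega) (by omega)]
            have hg := nth_gap (show 1 ≤ p₀ - 1 by omega)
              (show p₀ - 1 < p₀ by omega) hle heven
            exact natE_lt_natE.mpr (by omega)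
        · intro hval
          rcases Nat.eq_zero_or_pos (p₀ - 1) with h | h
          · rw [h, rowVal_zero] at hval
            exact absurd hval (natE_lt_top _).ne'
          · rw [rowVal_of_le (by omega) (by omega)] at hval
            have hg := nth_gap (show 1 ≤ p₀ - 1 by omega)
              (show p₀ - 1 < p₀ by omega) hle heven
            exact absurd (natE_inj.mp hval) (by omega)
        · intro _
          rw [hb]
          exact Or.inl hs
      · -- type 1 : shift
        refine ⟨p₀ - 1, t₀ + 1, by omega, hC,
          fun x hx h1 => absurd (heven x hx) (by omega), ?_, ?_, ?_, ?_⟩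
        · rw [hb, rowVal_of_le (by omega) hle]
          exact natE_lt_natE.mpr (by omega)
        · rcases Nat.eq_zero_or_pos (p₀ - 1) with h | h
          · rw [h, rowVal_zero]; exact natE_lt_top _
          · rw [rowVal_of_le (by omega) (by omega)]
            have hg := nth_gap (show 1 ≤ p₀ - 1 by omega)
              (show p₀ - 1 < p₀ by omega) hle heven
            exact natE_lt_natE.mpr (by omega)
        · intro hval
          rcases Nat.eq_zero_or_pos (p₀ - 1) with h | h
          · rw [h, rowVal_zero] at hval
            exact absurd hval (natE_lt_top _).ne'
          · rw [rowVal_of_le (by omega) (by omega)] at hval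
            have hg := nth_gap (show 1 ≤ p₀ - 1 by omega)
              (show p₀ - 1 < p₀ by omega) hle heven
            exact absurd (natE_inj.mp hval) (by omega)
        · intro _
          rw [hb]
          exact Or.inr hs
      · exact main_noshift fun _ _ => Or.inl hs
      · exact main_noshift fun _ _ => Or.inr hs
    · apply main_noshift
      intro hnth hp0
      rcases not_and_or.mp hcrit with h | h
      · exact absurd hp0 (not_not.mpr (by omega))
      · exact absurd hnth h

end Bressoud
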